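/- Let μ be a monotone, submodular, continuous-from-below set function on the Borel subsets of [0,1], 1 < p < ∞, 1/p + 1/q = 1. Then for all 0 ≤ x ≤ y ≤ 1 and all nonnegative f with (C)∫_0^1 f^p dμ < ∞, the Volterra–Choquet operator V(f)(x) = (C)∫_{[0,x]} f dμ satisfies |V(f)(y) − V(f)(x)| ≤ ‖f‖_{L_{p,μ}} · μ([x,y])^{1/q}, where ‖f‖_{L_{p,μ}} = ((C)∫_0^1 f^p dμ)^{1/p}. -/

import Mathlib

open MeasureTheory Set Filter Topology

/-- The Choquet integral of `f` over `A` with respect to the set function `μ`: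
`∫_0^∞ μ({f ≥ β} ∩ A) dβ + ∫_{-∞}^0 (μ({f ≥ β} ∩ A) - μ A) dβ`. -/
noncomputable def choquet {α : Type*} (μ : Set α → ℝ) (A : Set α) (f : α → ℝ) : ℝ :=
  (∫ β in Ioi (0:ℝ), μ ({ω | β ≤ f ω} ∩ A)) +
  ∫ β in Iio (0:ℝ), (μ ({ω | β ≤ f ω} ∩ A) - μ A)

section Aux

variable {μ : Set ℝ → ℝ}

lemma choquet_mu_nonneg (hμ0 : μ ∅ = 0) (hμmono : ∀ A B : Set ℝ, A ⊆ B → μ A ≤ μ B)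
    (A : Set ℝ) : 0 ≤ μ A := hμ0 ▸ hμmono ∅ A (empty_subset A)

lemma choquet_level_antitone (hμmono : ∀ A B : Set ℝ, A ⊆ B → μ A ≤ μ B)
    (g : ℝ → ℝ) (A : Set ℝ) : Antitone (fun β => μ ({t | β ≤ g t} ∩ A)) := by
  intro b c hbc
  exact hμmono _ _ (inter_subset_inter_left _ fun t ht => hbc.trans ht)

lemma choquet_of_nonneg (A : Set ℝ) (g : ℝ → ℝ) (hg : ∀ t, 0 ≤ g t) :
    choquet μ A g = ∫ β in Ioi (0:ℝ), μ ({t | β ≤ g t} ∩ A) := by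
  unfold choquet
  have h : ∀ β ∈ Iio (0:ℝ), (fun β => μ ({t | β ≤ g t} ∩ A) - μ A) β = (fun _ => (0:ℝ)) β := by
    intro β hβ
    have hu : {t | β ≤ g t} = univ := eq_univ_of_forall fun t => (le_of_lt hβ).trans (hg t)
    simp only [hu, univ_inter, sub_self]
  rw [setIntegral_congr_fun measurableSet_Iio h, integral_zero, add_zero]

lemma choquet_integrableOn_levelP (hμ0 : μ ∅ = 0)
    (hμmono : ∀ A B : Set ℝ, A ⊆ B → μ A ≤ μ B)
    {p : ℝ} {f : ℝ → ℝ}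
    (hfint : IntegrableOn (fun β => μ ({t | β ≤ f t ^ p} ∩ Icc 0 1)) (Ioi (0:ℝ)))
    {A : Set ℝ} (hA : A ⊆ Icc 0 1) :
    IntegrableOn (fun β => μ ({t | β ≤ f t ^ p} ∩ A)) (Ioi (0:ℝ)) := by
  refine Integrable.mono' hfint
    ((choquet_level_antitone hμmono _ A).measurable.aestronglyMeasurable) ?_
  refine Eventually.of_forall fun β => ?_
  rw [Real.norm_eq_abs, abs_of_nonneg (choquet_mu_nonneg hμ0 hμmono _)]
  exact hμmono _ _ (inter_subset_inter_right _ hA)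

lemma choquet_integrableOn_level (hμ0 : μ ∅ = 0)
    (hμmono : ∀ A B : Set ℝ, A ⊆ B → μ A ≤ μ B)
    {p : ℝ} (hp : 1 < p) {f : ℝ → ℝ} (hfpos : ∀ t, 0 ≤ f t)
    (hfint : IntegrableOn (fun β => μ ({t | β ≤ f t ^ p} ∩ Icc 0 1)) (Ioi (0:ℝ)))
    {A : Set ℝ} (hA : A ⊆ Icc 0 1) :
    IntegrableOn (fun β => μ ({t | β ≤ f t} ∩ A)) (Ioi (0:ℝ)) := by
  have hmeas := (choquet_level_antitone hμmono f A).measurable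
  have h01 : Ioc (0:ℝ) 1 ∪ Ioi 1 = Ioi 0 := Ioc_union_Ioi_eq_Ioi zero_le_one
  rw [← h01]
  refine IntegrableOn.union ?_ ?_
  · refine Integrable.mono' (g := fun _ => μ (Icc (0:ℝ) 1))
      (integrableOn_const measure_Ioc_lt_top.ne) hmeas.aestronglyMeasurable ?_
    refine Eventually.of_forall fun β => ?_
    rw [Real.norm_eq_abs, abs_of_nonneg (choquet_mu_nonneg hμ0 hμmono _)]
    exact hμmono _ _ (inter_subset_right.trans hA)
  · refine Integrable.mono' (hfint.mono_set (Ioi_subset_Ioi zero_le_one))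
      hmeas.aestronglyMeasurable ?_
    refine (ae_restrict_mem measurableSet_Ioi).mono fun β hβ => ?_
    rw [Real.norm_eq_abs, abs_of_nonneg (choquet_mu_nonneg hμ0 hμmono _)]
    refine hμmono _ _ (fun t ht => ?_)
    obtain ⟨ht1, ht2⟩ := ht
    have hft : (1:ℝ) ≤ f t := le_trans (le_of_lt hβ) ht1
    have hfp : f t ≤ f t ^ p := by
      nth_rewrite 1 [← Real.rpow_one (f t)]
      exact Real.rpow_le_rpow_of_exponent_le hft hp.le
    exact ⟨ht1.trans hfp, hA ht2⟩

lemma choquet_integral_comp_affine_Ioi (W : ℝ → ℝ) (hW : IntegrableOn W (Ioi (0:ℝ)))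
    {c : ℝ} (hc : 0 < c) (d : ℝ) :
    IntegrableOn (fun β => W (c * (β - d))) (Ioi d) ∧
      ∫ β in Ioi d, W (c * (β - d)) = c⁻¹ * ∫ s in Ioi (0:ℝ), W s := by
  have hWc : IntegrableOn (fun x => W (c * x)) (Ioi (0:ℝ)) := by
    refine (integrableOn_Ioi_comp_mul_left_iff W 0 hc).2 ?_
    simpa using hW
  set h0 : ℝ → ℝ := (Ioi (0:ℝ)).indicator (fun x => W (c * x)) with hh0
  have key : ∀ β : ℝ, (Ioi d).indicator (fun β => W (c * (β - d))) β = h0 (β - d) := by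
    intro β
    by_cases h : β ∈ Ioi d
    · rw [indicator_of_mem h, hh0, indicator_of_mem (by simpa [sub_pos] using h)]
    · rw [indicator_of_notMem h, hh0, indicator_of_notMem (by simpa [sub_pos] using h)]
  have h0int : Integrable h0 := (integrable_indicator_iff measurableSet_Ioi).2 hWc
  constructor
  · have h1 := h0int.comp_sub_right d
    have h2 : Integrable ((Ioi d).indicator fun β => W (c * (β - d))) :=
      h1.congr (Eventually.of_forall fun β => (key β).symm)
    exact (integrable_indicator_iff measurableSet_Ioi).1 h2
  · rw [← integral_indicator measurableSet_Ioi]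
    calc ∫ β, (Ioi d).indicator (fun β => W (c * (β - d))) β
        = ∫ β, h0 (β - d) := by simp_rw [key]
      _ = ∫ β, h0 β := by rw [integral_sub_right_eq_self h0 d]
      _ = ∫ x in Ioi (0:ℝ), W (c * x) := (integral_indicator measurableSet_Ioi)
      _ = c⁻¹ * ∫ s in Ioi (0:ℝ), W s := by
          rw [integral_comp_mul_left_Ioi W 0 hc, mul_zero, smul_eq_mul]

lemma choquet_holder_core (hμ0 : μ ∅ = 0)
    (hμmono : ∀ A B : Set ℝ, A ⊆ B → μ A ≤ μ B)
    {p q : ℝ} (hp : 1 < p) (hpq : 1/p + 1/q = 1)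
    {f : ℝ → ℝ} (hfpos : ∀ t, 0 ≤ f t) {A : Set ℝ}
    (hG : IntegrableOn (fun β => μ ({t | β ≤ f t} ∩ A)) (Ioi (0:ℝ)))
    (hW : IntegrableOn (fun β => μ ({t | β ≤ f t ^ p} ∩ A)) (Ioi (0:ℝ))) :
    ∫ β in Ioi (0:ℝ), μ ({t | β ≤ f t} ∩ A)
      ≤ (∫ β in Ioi (0:ℝ), μ ({t | β ≤ f t ^ p} ∩ A)) ^ (1/p) * μ A ^ (1/q) := by
  have hpq' : p.HolderConjugate q := Real.holderConjugate_iff.2 ⟨hp, by simpa [one_div] using hpq⟩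
  have hp0 : 0 < p := hpq'.pos
  have hq0 : 0 < q := hpq'.symm.pos
  set I := ∫ β in Ioi (0:ℝ), μ ({t | β ≤ f t} ∩ A) with hI
  set J := ∫ β in Ioi (0:ℝ), μ ({t | β ≤ f t ^ p} ∩ A) with hJ
  set M := μ A with hM
  have hMnn : 0 ≤ M := choquet_mu_nonneg hμ0 hμmono A
  have hJnn : 0 ≤ J :=
    setIntegral_nonneg measurableSet_Ioi fun β _ => choquet_mu_nonneg hμ0 hμmono _
  have key : ∀ l : ℝ, 0 < l → I ≤ l * M / q + l ^ (1 - p) * J / p := by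
    intro l hl
    set d := l / q with hd_def
    have hd : 0 < d := div_pos hl hq0
    set c := p * l ^ (p - 1) with hc_def
    have hc : 0 < c := mul_pos hp0 (Real.rpow_pos_of_pos hl _)
    obtain ⟨hint_aff, hval_aff⟩ := choquet_integral_comp_affine_Ioi _ hW hc d
    -- splitting
    have hsplit : Ioc (0:ℝ) d ∪ Ioi d = Ioi 0 := Ioc_union_Ioi_eq_Ioi hd.le
    have hdisj : Disjoint (Ioc (0:ℝ) d) (Ioi d) := by
      rw [Set.disjoint_left]
      rintro a ⟨_, h2⟩ h3
      exact absurd h2 (not_le.2 h3)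
    have hG1 : IntegrableOn (fun β => μ ({t | β ≤ f t} ∩ A)) (Ioc (0:ℝ) d) :=
      hG.mono_set (by rw [← hsplit]; exact subset_union_left)
    have hG2 : IntegrableOn (fun β => μ ({t | β ≤ f t} ∩ A)) (Ioi d) :=
      hG.mono_set (by rw [← hsplit]; exact subset_union_right)
    have hIsplit : I = (∫ β in Ioc (0:ℝ) d, μ ({t | β ≤ f t} ∩ A))
        + ∫ β in Ioi d, μ ({t | β ≤ f t} ∩ A) := by
      rw [hI, ← hsplit, setIntegral_union hdisj measurableSet_Ioi hG1 hG2]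
    -- first piece
    have hpiece1 : (∫ β in Ioc (0:ℝ) d, μ ({t | β ≤ f t} ∩ A)) ≤ d * M := by
      calc (∫ β in Ioc (0:ℝ) d, μ ({t | β ≤ f t} ∩ A))
          ≤ ∫ _ in Ioc (0:ℝ) d, M :=
            setIntegral_mono_on hG1 (integrableOn_const measure_Ioc_lt_top.ne)
              measurableSet_Ioc (fun β _ => hμmono _ _ inter_subset_right)
        _ = d * M := by
            rw [setIntegral_const, Real.volume_real_Ioc_of_le hd.le, smul_eq_mul, sub_zero]
    -- Young pointwise
    have hll : l ^ (1 - p) * l ^ (p - 1) = 1 := by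
      rw [← Real.rpow_add hl]; norm_num
    have hpiece2 : (∫ β in Ioi d, μ ({t | β ≤ f t} ∩ A))
        ≤ ∫ β in Ioi d, μ ({t | c * (β - d) ≤ f t ^ p} ∩ A) := by
      refine setIntegral_mono_on hG2 hint_aff measurableSet_Ioi fun β hβ => ?_
      refine hμmono _ _ (inter_subset_inter_left _ fun t ht => ?_)
      have ht' : β ≤ f t := ht
      -- Young's inequality
      have hyoung : f t ≤ f t ^ p * l ^ (1 - p) / p + l / q := by
        have h1 : (f t * l ^ (-(1/q))) * (l ^ (1/q))
            ≤ (f t * l ^ (-(1/q))) ^ p / p + (l ^ (1/q)) ^ q / q :=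
          Real.young_inequality_of_nonneg
            (mul_nonneg (hfpos t) (Real.rpow_nonneg hl.le _))
            (Real.rpow_nonneg hl.le _) hpq'
        have e1 : (f t * l ^ (-(1/q))) * (l ^ (1/q)) = f t := by
          rw [mul_assoc, ← Real.rpow_add hl, neg_add_cancel, Real.rpow_zero, mul_one]
        have hq1 : 1/q = 1 - 1/p := by linarith
        have e2 : (f t * l ^ (-(1/q))) ^ p = f t ^ p * l ^ (1 - p) := by
          rw [Real.mul_rpow (hfpos t) (Real.rpow_nonneg hl.le _),
            ← Real.rpow_mul hl.le]
          congr 1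
          rw [hq1]
          field_simp
          rw [neg_sub]
        have e3 : (l ^ (1/q)) ^ q = l := by
          rw [← Real.rpow_mul hl.le, one_div_mul_cancel hq0.ne', Real.rpow_one]
        rw [e1, e2, e3] at h1
        exact h1
      have h2 : β - d ≤ f t ^ p * l ^ (1 - p) / p := by
        have := ht'.trans hyoung
        rw [hd_def]; linarith
      have h3 : c * (β - d) ≤ (f t ^ p * l ^ (1 - p) / p) * c :=
        (mul_comm c (β - d)) ▸ mul_le_mul_of_nonneg_right h2 hc.le
      have h4 : (f t ^ p * l ^ (1 - p) / p) * c = f t ^ p := by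
        rw [hc_def]
        calc (f t ^ p * l ^ (1 - p) / p) * (p * l ^ (p - 1))
            = f t ^ p * (l ^ (1 - p) * l ^ (p - 1)) * (p / p) := by ring
          _ = f t ^ p := by rw [hll, div_self hp0.ne', mul_one, mul_one]
      exact (h3.trans_eq h4 : c * (β - d) ≤ f t ^ p)
    -- value of second piece
    have hval : (∫ β in Ioi d, μ ({t | c * (β - d) ≤ f t ^ p} ∩ A)) = c⁻¹ * J := hval_aff
    have hcinv : c⁻¹ = l ^ (1 - p) / p := by
      rw [hc_def, mul_inv, ← Real.rpow_neg hl.le, neg_sub]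
      ring
    rw [hIsplit]
    have : c⁻¹ * J = l ^ (1 - p) * J / p := by rw [hcinv]; ring
    calc (∫ β in Ioc (0:ℝ) d, μ ({t | β ≤ f t} ∩ A))
          + ∫ β in Ioi d, μ ({t | β ≤ f t} ∩ A)
        ≤ d * M + c⁻¹ * J := add_le_add hpiece1 (hpiece2.trans_eq hval)
      _ = l * M / q + l ^ (1 - p) * J / p := by rw [this, hd_def]; ring
  -- now optimize
  rcases eq_or_lt_of_le hMnn with hM0 | hMpos
  · -- M = 0
    have hIzero : I = 0 := by
      rw [hI]
      have : ∀ β ∈ Ioi (0:ℝ), μ ({t | β ≤ f t} ∩ A) = (fun _ => (0:ℝ)) β := by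
        intro β _
        refine le_antisymm ?_ (choquet_mu_nonneg hμ0 hμmono _)
        exact (hμmono _ _ inter_subset_right).trans (le_of_eq hM0.symm)
      rw [setIntegral_congr_fun measurableSet_Ioi this, integral_zero]
    rw [hIzero, ← hM0, Real.zero_rpow (one_div_ne_zero hq0.ne'), mul_zero]
  · rcases eq_or_lt_of_le hJnn with hJ0 | hJpos
    · -- J = 0
      have hIle : I ≤ 0 := by
        refine le_of_forall_pos_le_add fun ε hε => ?_
        have hl : 0 < ε * q / M := by positivity
        have := key _ hl
        rw [← hJ0] at this
        calc I ≤ (ε * q / M) * M / q + (ε * q / M) ^ (1 - p) * 0 / p := this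
          _ = ε := by field_simp; ring
          _ = 0 + ε := by ring
      have hrhs : (0:ℝ) ≤ J ^ (1/p) * M ^ (1/q) :=
        mul_nonneg (Real.rpow_nonneg hJnn _) (Real.rpow_nonneg hMnn _)
      exact hIle.trans hrhs
    · -- M > 0, J > 0
      set l := (J / M) ^ (1/p) with hl_def
      have hJM : 0 < J / M := div_pos hJpos hMpos
      have hl : 0 < l := Real.rpow_pos_of_pos hJM _
      have hkey := key l hl
      have hcomp : l * M / q + l ^ (1 - p) * J / p = J ^ (1/p) * M ^ (1/q) := by
        have hlp : l ^ (1 - p) = (J / M) ^ (1/p) * (J / M)⁻¹ := by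
          rw [hl_def, ← Real.rpow_mul hJM.le, ← Real.rpow_neg_one (J/M),
            ← Real.rpow_add hJM]
          congr 1
          field_simp [hp0.ne']
          ring
        have hqinv : 1/q = 1 - 1/p := by linarith
        have hMq : M ^ (1/q) = M / M ^ (1/p) := by
          rw [hqinv, Real.rpow_sub hMpos, Real.rpow_one]
        have hdiv : (J / M) ^ (1/p) = J ^ (1/p) / M ^ (1/p) :=
          Real.div_rpow hJnn hMnn _
        rw [hlp, hl_def, hdiv, hMq]
        have hMp : (0:ℝ) < M ^ (1/p) := Real.rpow_pos_of_pos hMpos _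
        have hpq2 : p + q = p * q := by
          field_simp at hpq
          linarith
        field_simp
        linear_combination hpq2
      exact hkey.trans_eq hcomp

end Aux

/-- Hölder-type estimate for the Volterra–Choquet operator: for `μ` monotone, submodular and
continuous from below on the Borel sets of `[0,1]`, `1 < p < ∞`, `1/p + 1/q = 1`,
`0 ≤ x ≤ y ≤ 1` and `f ≥ 0` with `(C)∫_0^1 f^p dμ` finite,
`|V(f)(y) − V(f)(x)| ≤ ‖f‖_{L_{p,μ}} · μ([x,y])^{1/q}`. -/
theorem volterraChoquet_holder_estimate
    (μ : Set ℝ → ℝ) (hμ0 : μ ∅ = 0)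
    (hμmono : ∀ A B : Set ℝ, A ⊆ B → μ A ≤ μ B)
    (hμsub : ∀ A B : Set ℝ, μ (A ∪ B) + μ (A ∩ B) ≤ μ A + μ B)
    (hμcb : ∀ A : ℕ → Set ℝ, (∀ k, MeasurableSet (A k)) → Monotone A →
      Tendsto (fun k => μ (A k)) atTop (𝓝 (μ (⋃ k, A k))))
    (p q : ℝ) (hp : 1 < p) (hpq : 1/p + 1/q = 1)
    (f : ℝ → ℝ) (hfmeas : Measurable f) (hfpos : ∀ t, 0 ≤ f t)
    (hfint : IntegrableOn (fun β => μ ({t | β ≤ f t ^ p} ∩ Icc 0 1)) (Ioi (0:ℝ)))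
    (x y : ℝ) (hx : x ∈ Icc (0:ℝ) 1) (hy : y ∈ Icc (0:ℝ) 1) (hxy : x ≤ y) :
    |choquet μ (Icc 0 y) f - choquet μ (Icc 0 x) f|
      ≤ (choquet μ (Icc 0 1) (fun t => f t ^ p)) ^ (1/p) * μ (Icc x y) ^ (1/q) := by
  obtain ⟨hx0, hx1⟩ := hx
  obtain ⟨hy0, hy1⟩ := hy
  have hA0x : Icc 0 x ⊆ Icc (0:ℝ) 1 := Icc_subset_Icc le_rfl hx1
  have hA0y : Icc 0 y ⊆ Icc (0:ℝ) 1 := Icc_subset_Icc le_rfl hy1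
  have hAxy : Icc x y ⊆ Icc (0:ℝ) 1 := Icc_subset_Icc hx0 hy1
  have hGx := choquet_integrableOn_level hμ0 hμmono hp hfpos hfint hA0x
  have hGy := choquet_integrableOn_level hμ0 hμmono hp hfpos hfint hA0y
  have hGxy := choquet_integrableOn_level hμ0 hμmono hp hfpos hfint hAxy
  have hWxy := choquet_integrableOn_levelP hμ0 hμmono hfint hAxy
  have hcx : choquet μ (Icc 0 x) f = ∫ β in Ioi (0:ℝ), μ ({t | β ≤ f t} ∩ Icc 0 x) :=
    choquet_of_nonneg _ _ hfpos
  have hcy : choquet μ (Icc 0 y) f = ∫ β in Ioi (0:ℝ), μ ({t | β ≤ f t} ∩ Icc 0 y) :=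
    choquet_of_nonneg _ _ hfpos
  have hc1 : choquet μ (Icc 0 1) (fun t => f t ^ p)
      = ∫ β in Ioi (0:ℝ), μ ({t | β ≤ f t ^ p} ∩ Icc 0 1) :=
    choquet_of_nonneg _ _ (fun t => Real.rpow_nonneg (hfpos t) p)
  have hle : choquet μ (Icc 0 x) f ≤ choquet μ (Icc 0 y) f := by
    rw [hcx, hcy]
    exact setIntegral_mono_on hGx hGy measurableSet_Ioi fun β _ =>
      hμmono _ _ (inter_subset_inter_right _ (Icc_subset_Icc le_rfl hxy))
  rw [abs_of_nonneg (sub_nonneg.2 hle), hcy, hcx]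
  have hIxy : Icc (0:ℝ) x ∪ Icc x y = Icc 0 y := Icc_union_Icc_eq_Icc hx0 hxy
  have step1 : (∫ β in Ioi (0:ℝ), μ ({t | β ≤ f t} ∩ Icc 0 y))
      - (∫ β in Ioi (0:ℝ), μ ({t | β ≤ f t} ∩ Icc 0 x))
      ≤ ∫ β in Ioi (0:ℝ), μ ({t | β ≤ f t} ∩ Icc x y) := by
    rw [sub_le_iff_le_add, ← integral_add hGxy hGx]
    refine setIntegral_mono_on hGy (hGxy.add hGx) measurableSet_Ioi fun β _ => ?_
    have hsets : {t | β ≤ f t} ∩ Icc 0 y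
        = ({t | β ≤ f t} ∩ Icc 0 x) ∪ ({t | β ≤ f t} ∩ Icc x y) := by
      rw [← hIxy, inter_union_distrib_left]
    calc μ ({t | β ≤ f t} ∩ Icc 0 y)
        = μ (({t | β ≤ f t} ∩ Icc 0 x) ∪ ({t | β ≤ f t} ∩ Icc x y)) := by rw [hsets]
      _ ≤ μ (({t | β ≤ f t} ∩ Icc 0 x) ∪ ({t | β ≤ f t} ∩ Icc x y))
          + μ (({t | β ≤ f t} ∩ Icc 0 x) ∩ ({t | β ≤ f t} ∩ Icc x y)) := by
          have := choquet_mu_nonneg hμ0 hμmono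
            (({t | β ≤ f t} ∩ Icc 0 x) ∩ ({t | β ≤ f t} ∩ Icc x y))
          linarith
      _ ≤ μ ({t | β ≤ f t} ∩ Icc 0 x) + μ ({t | β ≤ f t} ∩ Icc x y) := hμsub _ _
      _ = μ ({t | β ≤ f t} ∩ Icc x y) + μ ({t | β ≤ f t} ∩ Icc 0 x) := by ring
  have step2 := choquet_holder_core hμ0 hμmono hp hpq hfpos hGxy hWxy
  have step3 : (∫ β in Ioi (0:ℝ), μ ({t | β ≤ f t ^ p} ∩ Icc x y))
      ≤ ∫ β in Ioi (0:ℝ), μ ({t | β ≤ f t ^ p} ∩ Icc 0 1) :=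
    setIntegral_mono_on hWxy hfint measurableSet_Ioi fun β _ =>
      hμmono _ _ (inter_subset_inter_right _ hAxy)
  have hJxynn : 0 ≤ ∫ β in Ioi (0:ℝ), μ ({t | β ≤ f t ^ p} ∩ Icc x y) :=
    setIntegral_nonneg measurableSet_Ioi fun β _ => choquet_mu_nonneg hμ0 hμmono _
  calc (∫ β in Ioi (0:ℝ), μ ({t | β ≤ f t} ∩ Icc 0 y))
      - (∫ β in Ioi (0:ℝ), μ ({t | β ≤ f t} ∩ Icc 0 x))
      ≤ ∫ β in Ioi (0:ℝ), μ ({t | β ≤ f t} ∩ Icc x y) := step1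
    _ ≤ (∫ β in Ioi (0:ℝ), μ ({t | β ≤ f t ^ p} ∩ Icc x y)) ^ (1/p) * μ (Icc x y) ^ (1/q) :=
        step2
    _ ≤ (∫ β in Ioi (0:ℝ), μ ({t | β ≤ f t ^ p} ∩ Icc 0 1)) ^ (1/p) * μ (Icc x y) ^ (1/q) := by
        refine mul_le_mul_of_nonneg_right ?_ (Real.rpow_nonneg (choquet_mu_nonneg hμ0 hμmono _) _)
        exact Real.rpow_le_rpow hJxynn step3 (by positivity)
    _ = (choquet μ (Icc 0 1) (fun t => f t ^ p)) ^ (1/p) * μ (Icc x y) ^ (1/q) := by rw [hc1]
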